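/- Let G be a Hausdorff ample groupoid, let G^a denote the inverse semigroup of all compact open bisections of G under the product UV={uv : u∈U, v∈V, d(u)=r(v)} and inverse U⁻¹={u⁻¹ : u∈U}, and for each B∈G^a let π_B : d(B)→r(B) be the homeomorphism u↦r(Bu). Then the semigroup homomorphism π : G^a → I(G⁰), B↦π_B, into the inverse semigroup of partial homeomorphisms of G⁰ is injective if and only if G is effective. -/

import Mathlib

open Set Function

/-- A groupoid structure on a type `G`: a small category in which every morphism is
invertible, encoded with a total multiplication `mul` that is only meaningful on
composable pairs.  Here `d x = x⁻¹x` and `r x = xx⁻¹`, and a pair `(x, y)` is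
composable exactly when `d x = r y`. -/
structure GroupoidStr (G : Type*) where
  mul : G → G → G
  inv : G → G
  inv_inv : ∀ x, inv (inv x) = x
  /-- `x · d x = x` -/
  mul_d : ∀ x, mul x (mul (inv x) x) = x
  /-- `r x · x = x` -/
  r_mul : ∀ x, mul (mul x (inv x)) x = x
  /-- associativity on composable pairs -/
  assoc : ∀ x y z, mul (inv x) x = mul y (inv y) → mul (inv y) y = mul z (inv z) →
    mul (mul x y) z = mul x (mul y z)
  /-- `d (xy) = d y` for composable `x, y` -/
  d_comp : ∀ x y, mul (inv x) x = mul y (inv y) →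
    mul (inv (mul x y)) (mul x y) = mul (inv y) y
  /-- `r (xy) = r x` for composable `x, y` -/
  r_comp : ∀ x y, mul (inv x) x = mul y (inv y) →
    mul (mul x y) (inv (mul x y)) = mul x (inv x)
  /-- `(xy)⁻¹ = y⁻¹x⁻¹` for composable `x, y` -/
  inv_mul : ∀ x y, mul (inv x) x = mul y (inv y) → inv (mul x y) = mul (inv y) (inv x)
  /-- units are their own inverses -/
  unit_self_inv : ∀ x, inv (mul (inv x) x) = mul (inv x) x
  /-- units are idempotents -/
  unit_idem : ∀ x, mul (mul (inv x) x) (mul (inv x) x) = mul (inv x) x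

namespace GroupoidStr

variable {G : Type*} (S : GroupoidStr G)

/-- The domain (source) `d x = x⁻¹ x` of `x`. -/
def d (x : G) : G := S.mul (S.inv x) x

/-- The range `r x = x x⁻¹` of `x`. -/
def r (x : G) : G := S.mul x (S.inv x)

/-- The unit space `G⁰ = d(G) = r(G)`. -/
def unitSpace : Set G := Set.range S.d

/-- The isotropy bundle `Iso(G) = {x | d x = r x}`. -/
def IsoSet : Set G := {x | S.d x = S.r x}

/-- The orbit of a unit `u`: `{r γ : d γ = u}`. -/
def orbit (u : G) : Set G := S.r '' {γ : G | S.d γ = u}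

/-- A subset `U` of the unit space is invariant if `d γ ∈ U` implies `r γ ∈ U`. -/
def IsInvariant (U : Set G) : Prop := ∀ γ : G, S.d γ ∈ U → S.r γ ∈ U

section Top

variable [TopologicalSpace G]

/-- `G` is a topological groupoid: inversion and composition (on the set of composable
pairs, with the relative product topology) are continuous. -/
def IsTopological : Prop :=
  Continuous S.inv ∧
    Continuous fun p : {p : G × G // S.d p.1 = S.r p.2} => S.mul p.1.1 p.1.2

/-- An open bisection: an open set on which both `d` and `r` restrict to homeomorphisms
onto open subsets of the unit space. -/
def IsOpenBisection (U : Set G) : Prop :=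
  IsOpen U ∧ Set.InjOn S.d U ∧ Set.InjOn S.r U ∧
    (∀ V ⊆ U, IsOpen V → IsOpen (S.d '' V)) ∧ (∀ V ⊆ U, IsOpen V → IsOpen (S.r '' V))

/-- An étale groupoid: there is a basis of open bisections (equivalently, `d` is a local
homeomorphism). -/
def IsEtale : Prop := ∀ x : G, ∃ U, x ∈ U ∧ S.IsOpenBisection U

/-- An ample groupoid: there is a basis of compact open bisections. -/
def IsAmple : Prop :=
  ∀ (x : G) (W : Set G), x ∈ W → IsOpen W →
    ∃ U, x ∈ U ∧ U ⊆ W ∧ IsCompact U ∧ S.IsOpenBisection U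

def IsCompactOpenBisection (U : Set G) : Prop := IsCompact U ∧ S.IsOpenBisection U

/-- `G` is effective if the interior of the isotropy bundle is the unit space. -/
def IsEffective : Prop := interior S.IsoSet = S.unitSpace

variable (R : Type*) [CommRing R]

/-- The underlying set of the Steinberg algebra `A_R(G)`: locally constant,
compactly supported `R`-valued functions on `G`. -/
def SteinSet : Set (G → R) := {f | IsLocallyConstant f ∧ HasCompactSupport f}

variable {R}

/-- Convolution: `(f * g) γ = ∑_{αβ = γ} f α * g β`. -/
noncomputable def conv (f g : G → R) : G → R := fun γ =>
  ∑ᶠ p ∈ {p : G × G | S.d p.1 = S.r p.2 ∧ S.mul p.1 p.2 = γ}, f p.1 * g p.2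

end Top

end GroupoidStr

namespace GroupoidStr

variable {G : Type*} (S : GroupoidStr G)

/-- The graph of the partial homeomorphism `π_B : d(B) → r(B)`, `u ↦ r(Bu)`, of the unit
space associated to a bisection `B`; as a set of pairs it is `{(d b, r b) : b ∈ B}`. -/
def graphOf (B : Set G) : Set (G × G) := {p | ∃ b ∈ B, S.d b = p.1 ∧ S.r b = p.2}

end GroupoidStr

namespace GroupoidStr

variable {G : Type*} (S : GroupoidStr G)

section Alg

lemma d_inv_eq (x : G) : S.d (S.inv x) = S.r x := by
  unfold d r; rw [S.inv_inv]

lemma r_inv_eq (x : G) : S.r (S.inv x) = S.d x := by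
  unfold d r; rw [S.inv_inv]

lemma unit_d {w : G} (hw : w ∈ S.unitSpace) : S.d w = w := by
  obtain ⟨γ, rfl⟩ := hw
  show S.mul (S.inv (S.mul (S.inv γ) γ)) (S.mul (S.inv γ) γ) = S.mul (S.inv γ) γ
  rw [S.unit_self_inv γ]
  exact S.unit_idem γ

lemma unit_r {w : G} (hw : w ∈ S.unitSpace) : S.r w = w := by
  obtain ⟨γ, rfl⟩ := hw
  show S.mul (S.mul (S.inv γ) γ) (S.inv (S.mul (S.inv γ) γ)) = S.mul (S.inv γ) γ
  rw [S.unit_self_inv γ]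
  exact S.unit_idem γ

lemma r_mem_unitSpace (x : G) : S.r x ∈ S.unitSpace :=
  ⟨S.inv x, S.d_inv_eq x⟩

lemma d_mul {x y : G} (h : S.d x = S.r y) : S.d (S.mul x y) = S.d y :=
  S.d_comp x y h

lemma r_mul_eq {x y : G} (h : S.d x = S.r y) : S.r (S.mul x y) = S.r x :=
  S.r_comp x y h

/-- `x⁻¹ (x y) = y` for composable `x, y`. -/
lemma inv_mul_cancel_left {x y : G} (h : S.d x = S.r y) :
    S.mul (S.inv x) (S.mul x y) = y := by
  have h1 : S.mul (S.inv (S.inv x)) (S.inv x) = S.mul x (S.inv x) := by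
    rw [S.inv_inv]
  have ha := S.assoc (S.inv x) x y h1 h
  rw [← ha]
  have hx : S.mul (S.inv x) x = S.mul y (S.inv y) := h
  rw [hx]
  exact S.r_mul y

/-- `x (x⁻¹ y) = y` when `r x = r y`. -/
lemma mul_inv_cancel_left {x y : G} (h : S.r x = S.r y) :
    S.mul x (S.mul (S.inv x) y) = y := by
  have h1 : S.mul (S.inv x) x = S.mul (S.inv x) (S.inv (S.inv x)) := by
    rw [S.inv_inv]
  have h2 : S.mul (S.inv (S.inv x)) (S.inv x) = S.mul y (S.inv y) := by
    rw [S.inv_inv]; exact h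
  have ha := S.assoc x (S.inv x) y h1 h2
  rw [← ha]
  have hx : S.mul x (S.inv x) = S.mul y (S.inv y) := h
  rw [hx]
  exact S.r_mul y

/-- `(x y⁻¹) y = x` when `d x = d y`. -/
lemma mul_inv_mul_cancel {x y : G} (h : S.d x = S.d y) :
    S.mul (S.mul x (S.inv y)) y = x := by
  have h1 : S.mul (S.inv x) x = S.mul (S.inv y) (S.inv (S.inv y)) := by
    rw [S.inv_inv]; exact h
  have h2 : S.mul (S.inv (S.inv y)) (S.inv y) = S.mul y (S.inv y) := by
    rw [S.inv_inv]
  have ha := S.assoc x (S.inv y) y h1 h2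
  rw [ha]
  have hy : S.mul (S.inv y) y = S.mul (S.inv x) x := h.symm
  rw [hy]
  exact S.mul_d x

end Alg

section TopLemmas

variable [TopologicalSpace G]

lemma cont_d (hTop : S.IsTopological) : Continuous S.d := by
  have hg : Continuous fun x : G =>
      (⟨(S.inv x, x), S.d_inv_eq x⟩ : {p : G × G // S.d p.1 = S.r p.2}) :=
    Continuous.subtype_mk (hTop.1.prodMk continuous_id) _
  exact hTop.2.comp hg

lemma cont_r (hTop : S.IsTopological) : Continuous S.r := by
  have hg : Continuous fun x : G =>
      (⟨(x, S.inv x), (S.r_inv_eq x).symm⟩ : {p : G × G // S.d p.1 = S.r p.2}) :=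
    Continuous.subtype_mk (continuous_id.prodMk hTop.1) _
  exact hTop.2.comp hg

lemma contOn_mul (hTop : S.IsTopological) :
    ContinuousOn (fun p : G × G => S.mul p.1 p.2) {p : G × G | S.d p.1 = S.r p.2} := by
  rw [continuousOn_iff_continuous_restrict]
  exact hTop.2

/-- The unit space of an ample (indeed étale) topological groupoid is open. -/
lemma unitSpace_isOpen (hTop : S.IsTopological) (hAmple : S.IsAmple) :
    IsOpen S.unitSpace := by
  rw [isOpen_iff_forall_mem_open]
  intro u hu
  obtain ⟨U, hxU, -, -, hUbis⟩ := hAmple u Set.univ (Set.mem_univ u) isOpen_univ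
  refine ⟨U ∩ S.d ⁻¹' U, ?_, hUbis.1.inter (hUbis.1.preimage (S.cont_d hTop)), hxU,
    by rw [Set.mem_preimage, S.unit_d hu]; exact hxU⟩
  rintro γ ⟨hγU, hγd⟩
  have h1 : S.d γ ∈ S.unitSpace := ⟨γ, rfl⟩
  have h2 : S.d (S.d γ) = S.d γ := S.unit_d h1
  have := hUbis.2.1 hγd hγU h2
  rw [← this]
  exact h1

end TopLemmas

end GroupoidStr

namespace GroupoidStr

variable {G : Type*} (S : GroupoidStr G) [TopologicalSpace G]

/-- The inverse of `r` restricted to an open bisection is continuous on `r '' B`. -/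
lemma contOn_rinv [Nonempty G] {B : Set G} (hB : S.IsOpenBisection B) :
    ContinuousOn (Function.invFunOn S.r B) (S.r '' B) := by
  rw [continuousOn_open_iff (hB.2.2.2.2 B le_rfl hB.1)]
  intro t ht
  have heq : S.r '' B ∩ Function.invFunOn S.r B ⁻¹' t = S.r '' (B ∩ t) := by
    ext w
    constructor
    · rintro ⟨⟨b, hb, rfl⟩, hmem⟩
      have hex : ∃ a ∈ B, S.r a = S.r b := ⟨b, hb, rfl⟩
      have hval : Function.invFunOn S.r B (S.r b) = b :=
        hB.2.2.1 (Function.invFunOn_mem hex) hb (Function.invFunOn_eq hex)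
      refine ⟨b, ⟨hb, ?_⟩, rfl⟩
      rw [← hval]; exact hmem
    · rintro ⟨b, ⟨hb, hbt⟩, rfl⟩
      have hex : ∃ a ∈ B, S.r a = S.r b := ⟨b, hb, rfl⟩
      have hval : Function.invFunOn S.r B (S.r b) = b :=
        hB.2.2.1 (Function.invFunOn_mem hex) hb (Function.invFunOn_eq hex)
      refine ⟨⟨b, hb, rfl⟩, ?_⟩
      rw [Set.mem_preimage, hval]; exact hbt
  rw [heq]
  exact hB.2.2.2.2 (B ∩ t) Set.inter_subset_left (hB.1.inter ht)

/-- Key step: if the groupoid is effective and two open bisections have the same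
graph, then one is contained in the other. -/
lemma subset_of_graphOf_eq [Nonempty G] (hTop : S.IsTopological) (heff : S.IsEffective)
    {B C : Set G} (hB : S.IsOpenBisection B) (hC : S.IsOpenBisection C)
    (hg : S.graphOf B = S.graphOf C) : B ⊆ C := by
  intro b hb
  have hbg : (S.d b, S.r b) ∈ S.graphOf B := ⟨b, hb, rfl, rfl⟩
  rw [hg] at hbg
  obtain ⟨c, hc, hdc, hrc⟩ := hbg
  set ρ : G → G := Function.invFunOn S.r B with hρdef
  set F : G → G := fun γ => S.mul (S.inv (ρ (S.r γ))) γ with hFdef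
  set O : Set G := S.r ⁻¹' (S.r '' B) with hOdef
  have hOopen : IsOpen O := (hB.2.2.2.2 B le_rfl hB.1).preimage (S.cont_r hTop)
  have hρcont : ContinuousOn ρ (S.r '' B) := S.contOn_rinv hB
  have hg1 : ContinuousOn (fun γ => S.inv (ρ (S.r γ))) O := by
    have h1 : ContinuousOn (fun γ => ρ (S.r γ)) O :=
      hρcont.comp (S.cont_r hTop).continuousOn (fun γ hγ => hγ)
    exact hTop.1.comp_continuousOn h1
  have hpair : ContinuousOn (fun γ => ((S.inv (ρ (S.r γ)), γ) : G × G)) O :=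
    hg1.prodMk continuousOn_id
  have hmaps : Set.MapsTo (fun γ => ((S.inv (ρ (S.r γ)), γ) : G × G)) O
      {p : G × G | S.d p.1 = S.r p.2} := by
    intro γ hγ
    have hex : ∃ a ∈ B, S.r a = S.r γ := hγ
    show S.d (S.inv (ρ (S.r γ))) = S.r γ
    rw [S.d_inv_eq]
    exact Function.invFunOn_eq hex
  have hFcont : ContinuousOn F O := (S.contOn_mul hTop).comp hpair hmaps
  set W : Set G := O ∩ F ⁻¹' (S.inv ⁻¹' C) with hWdef
  have hWopen : IsOpen W := hFcont.isOpen_inter_preimage hOopen (hC.1.preimage hTop.1)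
  set x : G := S.mul b (S.inv c) with hxdef
  have hcomp_bc : S.d b = S.r (S.inv c) := by rw [S.r_inv_eq]; exact hdc.symm
  have hρrb : ρ (S.r b) = b := by
    have hex : ∃ a ∈ B, S.r a = S.r b := ⟨b, hb, rfl⟩
    exact hB.2.2.1 (Function.invFunOn_mem hex) hb (Function.invFunOn_eq hex)
  have hrx : S.r x = S.r b := S.r_mul_eq hcomp_bc
  have hxW : x ∈ W := by
    constructor
    · show S.r x ∈ S.r '' B
      rw [hrx]; exact ⟨b, hb, rfl⟩
    · show S.inv (F x) ∈ C
      have hFx : F x = S.inv c := by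
        show S.mul (S.inv (ρ (S.r x))) x = S.inv c
        rw [hrx, hρrb, hxdef, S.inv_mul_cancel_left hcomp_bc]
      rw [hFx, S.inv_inv]; exact hc
  have hWiso : W ⊆ S.IsoSet := by
    rintro γ ⟨hγO, hγC⟩
    have hexγ : ∃ a ∈ B, S.r a = S.r γ := hγO
    have hb'B : ρ (S.r γ) ∈ B := Function.invFunOn_mem hexγ
    have hrb' : S.r (ρ (S.r γ)) = S.r γ := Function.invFunOn_eq hexγ
    have hc'C : S.inv (F γ) ∈ C := hγC
    have hFinv : S.inv (S.inv (F γ)) = F γ := S.inv_inv _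
    have hγeq : γ = S.mul (ρ (S.r γ)) (S.inv (S.inv (F γ))) := by
      rw [hFinv, hFdef]
      exact (S.mul_inv_cancel_left hrb').symm
    have hcomp' : S.d (S.inv (ρ (S.r γ))) = S.r γ := by rw [S.d_inv_eq]; exact hrb'
    have hrF : S.r (F γ) = S.d (ρ (S.r γ)) := by
      rw [hFdef]
      show S.r (S.mul (S.inv (ρ (S.r γ))) γ) = S.d (ρ (S.r γ))
      rw [S.r_mul_eq hcomp', S.r_inv_eq]
    have hdbc' : S.d (ρ (S.r γ)) = S.d (S.inv (F γ)) := by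
      rw [← S.r_inv_eq (S.inv (F γ)), hFinv, hrF]
    have hbg' : (S.d (ρ (S.r γ)), S.r (ρ (S.r γ))) ∈ S.graphOf C := by
      rw [← hg]; exact ⟨ρ (S.r γ), hb'B, rfl, rfl⟩
    obtain ⟨c'', hc'', hd'', hr''⟩ := hbg'
    have hceq : c'' = S.inv (F γ) := hC.2.1 hc'' hc'C (by rw [hd'', hdbc'])
    have hrc' : S.r (S.inv (F γ)) = S.r (ρ (S.r γ)) := by rw [← hceq, hr'']
    have h₁ : S.d (ρ (S.r γ)) = S.r (S.inv (S.inv (F γ))) := by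
      rw [S.r_inv_eq]; exact hdbc'
    show S.d γ = S.r γ
    rw [hγeq, S.d_mul h₁, S.r_mul_eq h₁, S.d_inv_eq, hrc']
  have hxint : x ∈ interior S.IsoSet := mem_interior.mpr ⟨W, hWiso, hWopen, hxW⟩
  rw [heff] at hxint
  have hdx : S.d x = S.r c := by rw [hxdef, S.d_mul hcomp_bc, S.d_inv_eq]
  have hxrc : x = S.r c := by rw [← S.unit_d hxint, hdx]
  have hxc : S.mul x c = b := by rw [hxdef]; exact S.mul_inv_mul_cancel hdc.symm
  have hbc : b = c := by rw [← hxc, hxrc]; exact S.r_mul c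
  rw [hbc]; exact hc

end GroupoidStr

/-- For a Hausdorff ample groupoid `G`, the homomorphism
`π : G^a → I(G⁰)` sending a compact open bisection `B` to the partial homeomorphism
`π_B : d(B) → r(B)`, `u ↦ r(Bu)` (identified here with its graph
`{(d b, r b) : b ∈ B}`) is injective if and only if `G` is effective. -/
theorem pi_injective_iff_effective {G : Type*} [TopologicalSpace G]
    (S : GroupoidStr G) [T2Space G] (hTop : S.IsTopological) (hAmple : S.IsAmple) :
    Set.InjOn (fun B => S.graphOf B) {B : Set G | S.IsCompactOpenBisection B} ↔
      S.IsEffective := by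
  constructor
  · intro hinj
    apply Set.Subset.antisymm
    · intro x hx
      obtain ⟨B, hxB, hBsub, hBcomp, hBbis⟩ :=
        hAmple x (interior S.IsoSet) hx isOpen_interior
      have hBiso : B ⊆ S.IsoSet := hBsub.trans interior_subset
      have hunit : ∀ w ∈ S.d '' B, w ∈ S.unitSpace := by
        rintro w ⟨b, hb, rfl⟩; exact ⟨b, rfl⟩
      have hfix_d : ∀ w ∈ S.d '' B, S.d w = w := fun w hw => S.unit_d (hunit w hw)
      have hfix_r : ∀ w ∈ S.d '' B, S.r w = w := fun w hw => S.unit_r (hunit w hw)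
      have hB0bis : S.IsCompactOpenBisection (S.d '' B) := by
        refine ⟨hBcomp.image (S.cont_d hTop), hBbis.2.2.2.1 B le_rfl hBbis.1, ?_, ?_, ?_, ?_⟩
        · intro w1 h1 w2 h2 he
          rw [hfix_d w1 h1, hfix_d w2 h2] at he; exact he
        · intro w1 h1 w2 h2 he
          rw [hfix_r w1 h1, hfix_r w2 h2] at he; exact he
        · intro V hV hVopen
          have hVeq : S.d '' V = V := by
            apply Set.Subset.antisymm
            · rintro w ⟨v, hv, rfl⟩
              rw [hfix_d v (hV hv)]; exact hv
            · intro v hv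
              exact ⟨v, hv, hfix_d v (hV hv)⟩
          rw [hVeq]; exact hVopen
        · intro V hV hVopen
          have hVeq : S.r '' V = V := by
            apply Set.Subset.antisymm
            · rintro w ⟨v, hv, rfl⟩
              rw [hfix_r v (hV hv)]; exact hv
            · intro v hv
              exact ⟨v, hv, hfix_r v (hV hv)⟩
          rw [hVeq]; exact hVopen
      have hgraph : S.graphOf B = S.graphOf (S.d '' B) := by
        ext p
        constructor
        · rintro ⟨b, hb, h1, h2⟩
          have hmem : S.d b ∈ S.d '' B := ⟨b, hb, rfl⟩
          refine ⟨S.d b, hmem, by rw [hfix_d _ hmem]; exact h1, ?_⟩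
          rw [hfix_r _ hmem, ← h2]
          exact hBiso hb
        · rintro ⟨w, hw, h1, h2⟩
          obtain ⟨b, hb, rfl⟩ := hw
          have hmem : S.d b ∈ S.d '' B := ⟨b, hb, rfl⟩
          refine ⟨b, hb, by rw [← hfix_d _ hmem]; exact h1, ?_⟩
          rw [← (hBiso hb : S.d b = S.r b), ← hfix_r _ hmem]; exact h2
      have hBeq : B = S.d '' B := hinj ⟨hBcomp, hBbis⟩ hB0bis hgraph
      exact hunit x (hBeq ▸ hxB)
    · have hsub : S.unitSpace ⊆ S.IsoSet := by
        intro w hw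
        show S.d w = S.r w
        rw [S.unit_d hw, S.unit_r hw]
      exact interior_maximal hsub (S.unitSpace_isOpen hTop hAmple)
  · intro heff B hB C hC hgr
    rcases isEmpty_or_nonempty G with hG | hG
    · rw [Set.eq_empty_of_isEmpty B, Set.eq_empty_of_isEmpty C]
    · exact Set.Subset.antisymm
        (S.subset_of_graphOf_eq hTop heff hB.2 hC.2 hgr)
        (S.subset_of_graphOf_eq hTop heff hC.2 hB.2 hgr.symm)
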